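/- Let D be a round digraph on n ≥ 1 vertices. Then δ⁺(D) = cn(D) = fvs(D), where δ⁺(D) is the minimum out-degree of D. -/

import Mathlib

open scoped Classical

/-- The out-neighborhood of a set `S` in the digraph with arc relation `A`. -/
noncomputable def Nplus {V : Type} [Fintype V] (A : V → V → Prop) (S : Finset V) : Finset V :=
  Finset.univ.filter (fun y => ∃ x ∈ S, A x y)

/-- The robber territories associated with a cop strategy `W` (0-indexed:
`terr A W i` is the paper's `R_{i+1}`). -/
noncomputable def terr {V : Type} [Fintype V] [DecidableEq V]
    (A : V → V → Prop) (W : ℕ → Finset V) : ℕ → Finset V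
  | 0 => Finset.univ \ W 0
  | i + 1 => Nplus A (terr A W i) \ W (i + 1)

/-- A cop strategy uses at most `k` cops. -/
def UsesAtMost {V : Type} (W : ℕ → Finset V) (k : ℕ) : Prop :=
  ∀ i, (W i).card ≤ k

/-- The cop number: the least `k` admitting a winning strategy using `k` cops. -/
noncomputable def copNumber {V : Type} [Fintype V] [DecidableEq V] (A : V → V → Prop) : ℕ :=
  sInf {k | ∃ W : ℕ → Finset V, UsesAtMost W k ∧ ∃ t, terr A W t = ∅}

/-- The subdigraph induced by `S` is acyclic (loops count as cycles). -/
def AcyclicOn {V : Type} (A : V → V → Prop) (S : Finset V) : Prop :=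
  ∀ v ∈ S, ¬ Relation.TransGen (fun x y => x ∈ S ∧ y ∈ S ∧ A x y) v v

/-- The minimum size of a feedback vertex set of the digraph with arc relation `A`. -/
noncomputable def fvsNumber {V : Type} [Fintype V] [DecidableEq V] (A : V → V → Prop) : ℕ :=
  sInf {c | ∃ X : Finset V, X.card = c ∧ AcyclicOn A (Finset.univ \ X)}

/-- The minimum out-degree of the digraph with arc relation `A`. -/
noncomputable def minOutDeg {V : Type} [Fintype V] (A : V → V → Prop) : ℕ :=
  sInf {d | ∃ v : V, (Finset.univ.filter (fun u => A v u)).card = d}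

-- Lemma A : minOutDeg ≤ copNumber
lemma aux_minOutDeg_le_copNumber {V : Type} [Fintype V] [DecidableEq V] (A : V → V → Prop)
    (hV : 0 < Fintype.card V) : minOutDeg A ≤ copNumber A := by
  by_contra h
  push_neg at h
  have hne : {k | ∃ W : ℕ → Finset V, UsesAtMost W k ∧ ∃ t, terr A W t = ∅}.Nonempty := by
    refine ⟨Fintype.card V, fun _ => Finset.univ, fun i => by simp, 0, by simp [terr]⟩
  obtain ⟨W, hW, t, ht⟩ := Nat.sInf_mem hne
  have hd : ∀ w : V, minOutDeg A ≤ (Finset.univ.filter (fun u => A w u)).card :=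
    fun w => Nat.sInf_le ⟨w, rfl⟩
  have hdn : minOutDeg A ≤ Fintype.card V := by
    obtain ⟨w⟩ := Fintype.card_pos_iff.mp hV
    exact (hd w).trans ((Finset.card_filter_le _ _).trans_eq Finset.card_univ)
  have hWlt : ∀ i, (W i).card < minOutDeg A := fun i => lt_of_le_of_lt (hW i) h
  have hnonempty : ∀ s, (terr A W s).Nonempty := by
    intro s
    induction s with
    | zero =>
      rw [← Finset.card_pos]
      have := Finset.le_card_sdiff (W 0) Finset.univ
      have h0 := hWlt 0
      simp only [Finset.card_univ] at this
      simp only [terr]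
      omega
    | succ s ih =>
      obtain ⟨x, hx⟩ := ih
      have hsub : Finset.univ.filter (fun u => A x u) ⊆ Nplus A (terr A W s) := by
        intro y hy
        simp only [Finset.mem_filter, Finset.mem_univ, true_and] at hy
        simp only [Nplus, Finset.mem_filter, Finset.mem_univ, true_and]
        exact ⟨x, hx, hy⟩
      have h1 : minOutDeg A ≤ (Nplus A (terr A W s)).card :=
        (hd x).trans (Finset.card_le_card hsub)
      rw [← Finset.card_pos]
      have := Finset.le_card_sdiff (W (s+1)) (Nplus A (terr A W s))
      have h2 := hWlt (s+1)
      simp only [terr]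
      omega
  exact (hnonempty t).ne_empty ht

-- Lemma B : copNumber ≤ fvsNumber
lemma aux_copNumber_le_fvsNumber {V : Type} [Fintype V] [DecidableEq V] (A : V → V → Prop) :
    copNumber A ≤ fvsNumber A := by
  have hne : {c | ∃ X : Finset V, X.card = c ∧ AcyclicOn A (Finset.univ \ X)}.Nonempty := by
    refine ⟨Fintype.card V, Finset.univ, by simp, ?_⟩
    intro u hu
    simp at hu
  obtain ⟨X, hXcard, hXacyc⟩ := Nat.sInf_mem hne
  set W : ℕ → Finset V := fun _ => X with hWdef
  set n := Fintype.card V with hndef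
  -- chains
  have hchain : ∀ t, ∀ y ∈ terr A W t, ∃ g : ℕ → V, g t = y ∧ (∀ j, j ≤ t → g j ∉ X) ∧
      (∀ j, j < t → A (g j) (g (j+1))) := by
    intro t
    induction t with
    | zero =>
      intro y hy
      simp only [terr, Finset.mem_sdiff] at hy
      exact ⟨fun _ => y, rfl, fun j _ => hy.2, fun j hj => absurd hj (by omega)⟩
    | succ t ih =>
      intro y hy
      simp only [terr, Finset.mem_sdiff, Nplus, Finset.mem_filter, Finset.mem_univ,
        true_and] at hy
      obtain ⟨⟨x, hx, hAxy⟩, hyX⟩ := hy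
      obtain ⟨g, hgt, hgX, hgA⟩ := ih x hx
      refine ⟨fun j => if j ≤ t then g j else y, by simp, ?_, ?_⟩
      · intro j hj
        by_cases hjt : j ≤ t
        · simpa [hjt] using hgX j hjt
        · simpa [hjt] using hyX
      · intro j hj
        by_cases hjt : j + 1 ≤ t
        · have h1 : j ≤ t := by omega
          simp only [h1, if_true, hjt, if_true]
          exact hgA j (by omega)
        · have hjeq : j = t := by omega
          simp only [hjeq, le_refl, if_true, if_neg (by omega : ¬ t + 1 ≤ t), hgt]
          exact hAxy
  -- chains give TransGen
  have hTG : ∀ (g : ℕ → V) (b : ℕ), (∀ j, j ≤ b → g j ∉ X) → (∀ j, j < b → A (g j) (g (j+1))) →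
      ∀ a, a < b →
      Relation.TransGen (fun x y => x ∈ Finset.univ \ X ∧ y ∈ Finset.univ \ X ∧ A x y)
        (g a) (g b) := by
    intro g b hX hA a hab
    induction b with
    | zero => omega
    | succ b ihb =>
      have step : (fun x y => x ∈ Finset.univ \ X ∧ y ∈ Finset.univ \ X ∧ A x y) (g b) (g (b+1)) := by
        refine ⟨?_, ?_, hA b (by omega)⟩
        · simp [Finset.mem_sdiff, hX b (by omega)]
        · simp [Finset.mem_sdiff, hX (b+1) (by omega)]
      rcases Nat.lt_or_ge a b with hab' | hab'
      · exact Relation.TransGen.tail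
          (ihb (fun j hj => hX j (by omega)) (fun j hj => hA j (by omega)) hab') step
      · have : a = b := by omega
        subst this
        exact Relation.TransGen.single step
  -- terr at time n is empty
  have hterr : terr A W n = ∅ := by
    by_contra hne'
    obtain ⟨y, hy⟩ := Finset.nonempty_iff_ne_empty.mpr hne'
    obtain ⟨g, _, hgX, hgA⟩ := hchain n y hy
    obtain ⟨i, j, hij, hgij⟩ := Fintype.exists_ne_map_eq_of_card_lt
      (fun i : Fin (n+1) => g i) (by simp [← hndef])
    rcases Ne.lt_or_gt hij with hlt | hlt
    · have hT := hTG g j (fun k hk => hgX k (by omega)) (fun k hk => hgA k (by omega))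
        i (by exact_mod_cast hlt)
      rw [hgij] at hT
      exact hXacyc (g (j : ℕ)) (by simp [Finset.mem_sdiff, hgX j (by omega)]) hT
    · have hT := hTG g i (fun k hk => hgX k (by omega)) (fun k hk => hgA k (by omega))
        j (by exact_mod_cast hlt)
      rw [← hgij] at hT
      exact hXacyc (g (i : ℕ)) (by simp [Finset.mem_sdiff, hgX i (by omega)]) hT
  exact Nat.sInf_le ⟨W, fun i => le_of_eq hXcard, n, hterr⟩

-- natCast injectivity on [1, n]
lemma aux_cast_inj {n : ℕ} {s t : ℕ} (hs1 : 1 ≤ s) (hsn : s ≤ n) (ht1 : 1 ≤ t) (htn : t ≤ n)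
    (h : (s : ZMod n) = (t : ZMod n)) : s = t := by
  have hmod : s ≡ t [MOD n] := (ZMod.natCast_eq_natCast_iff s t n).mp h
  rcases le_total s t with hst | hst
  · have hdvd : n ∣ t - s := (Nat.modEq_iff_dvd' hst).mp hmod
    have : t - s = 0 := Nat.eq_zero_of_dvd_of_lt hdvd (by omega)
    omega
  · have hdvd : n ∣ s - t := (Nat.modEq_iff_dvd' hst).mp hmod.symm
    have : s - t = 0 := Nat.eq_zero_of_dvd_of_lt hdvd (by omega)
    omega

-- Lemma C : fvsNumber ≤ minOutDeg for round digraphs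
lemma aux_fvs_le_minOutDeg {V : Type} [Fintype V] [DecidableEq V] (A : V → V → Prop)
    (n : ℕ) (hn : 1 ≤ n) (hcard : Fintype.card V = n)
    (v : ZMod n ≃ V)
    (hout : ∀ (i : ZMod n) (s t : ℕ), 1 ≤ s → s ≤ t → t ≤ n →
      A (v i) (v (i + (t : ZMod n))) → A (v i) (v (i + (s : ZMod n))))
    (hin : ∀ (i : ZMod n) (s t : ℕ), 1 ≤ s → s ≤ t → t ≤ n →
      A (v (i - (t : ZMod n))) (v i) → A (v (i - (s : ZMod n))) (v i)) :
    fvsNumber A ≤ minOutDeg A := by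
  haveI : NeZero n := ⟨by omega⟩
  set d := minOutDeg A with hd
  obtain ⟨w0, hw0⟩ : ∃ w : V, (Finset.univ.filter (fun u => A w u)).card = d := by
    have hset : {k : ℕ | ∃ w : V, (Finset.univ.filter (fun u => A w u)).card = k}.Nonempty :=
      ⟨_, v 0, rfl⟩
    exact Nat.sInf_mem hset
  set i0 := v.symm w0 with hi0
  have hvi0 : v i0 = w0 := v.apply_symm_apply w0
  set X : Finset V := (Finset.Icc 1 d).image (fun s : ℕ => v (i0 + (s : ZMod n))) with hX
  -- the r function
  set r : V → ℕ := fun u => (v.symm u - i0).val with hr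
  have hrlt : ∀ u, r u < n := fun u => ZMod.val_lt _
  have hrcast : ∀ u : V, v (i0 + ((r u : ℕ) : ZMod n)) = u := by
    intro u
    have : ((r u : ℕ) : ZMod n) = v.symm u - i0 := ZMod.natCast_rightInverse _
    rw [this]
    simp
  have hr0 : ∀ u : V, r u = 0 ↔ u = w0 := by
    intro u
    simp only [hr, ZMod.val_eq_zero, sub_eq_zero]
    constructor
    · intro h; have := congrArg v h; simpa [hvi0] using this
    · intro h; subst h; rw [← hi0]
  -- K1 : any out-arc of w0 has length at most d
  have K1 : ∀ q : ℕ, 1 ≤ q → q ≤ n → A w0 (v (i0 + (q : ZMod n))) → q ≤ d := by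
    intro q hq1 hqn hA
    have hsub : (Finset.Icc 1 q).image (fun s : ℕ => v (i0 + (s : ZMod n))) ⊆
        Finset.univ.filter (fun u => A w0 u) := by
      intro y hy
      simp only [Finset.mem_image, Finset.mem_Icc] at hy
      obtain ⟨s, ⟨hs1, hsq⟩, rfl⟩ := hy
      simp only [Finset.mem_filter, Finset.mem_univ, true_and]
      have := hout i0 s q hs1 hsq hqn (by rwa [hvi0])
      rwa [hvi0] at this
    have hinj : Set.InjOn (fun s : ℕ => v (i0 + (s : ZMod n))) (Finset.Icc 1 q) := by
      intro a ha b hb hab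
      simp only [Finset.coe_Icc, Set.mem_Icc] at ha hb
      have h1 : i0 + (a : ZMod n) = i0 + (b : ZMod n) := v.injective hab
      have h2 : (a : ZMod n) = (b : ZMod n) := by
        have := congrArg (fun z => z - i0) h1
        simpa [add_comm, add_sub_cancel_right] using this
      exact aux_cast_inj ha.1 (ha.2.trans hqn) hb.1 (hb.2.trans hqn) h2
    have hcard1 : ((Finset.Icc 1 q).image (fun s : ℕ => v (i0 + (s : ZMod n)))).card = q := by
      rw [Finset.card_image_of_injOn hinj, Nat.card_Icc]
      omega
    have := Finset.card_le_card hsub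
    rw [hcard1, hw0] at this
    exact this
  have hdn : d ≤ n := by
    rw [← hw0]
    simpa [hcard] using Finset.card_filter_le Finset.univ (fun u => A w0 u)
  -- membership in X
  have hXmem : ∀ u : V, u ∈ X ↔ ∃ s : ℕ, 1 ≤ s ∧ s ≤ d ∧ u = v (i0 + (s : ZMod n)) := by
    intro u
    simp only [hX, Finset.mem_image, Finset.mem_Icc]
    constructor
    · rintro ⟨s, ⟨h1, h2⟩, rfl⟩; exact ⟨s, h1, h2, rfl⟩
    · rintro ⟨s, h1, h2, rfl⟩; exact ⟨s, ⟨h1, h2⟩, rfl⟩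
  -- K2 : no out-arc of w0 lands outside X
  have K2 : ∀ y : V, y ∉ X → ¬ A w0 y := by
    intro y hy hA
    by_cases hry : r y = 0
    · -- y = w0 : the arc is a loop, of "length" n
      have hyw : y = w0 := (hr0 y).mp hry
      have hq : v (i0 + ((n : ℕ) : ZMod n)) = y := by
        simp [ZMod.natCast_self, hvi0, hyw]
      have hnd : n ≤ d := K1 n hn le_rfl (by rwa [hq])
      exact hy ((hXmem y).mpr ⟨n, hn, hnd, hq.symm⟩)
    · have hq : v (i0 + ((r y : ℕ) : ZMod n)) = y := hrcast y
      have hrd : r y ≤ d := K1 (r y) (by omega) (le_of_lt (hrlt y)) (by rwa [hq])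
      exact hy ((hXmem y).mpr ⟨r y, by omega, hrd, hq.symm⟩)
  -- K3 : arcs outside X go strictly forward (unless they land on w0, which
  -- in fact cannot happen either, but we only need this form)
  have K3 : ∀ x y : V, x ∉ X → y ∉ X → y ≠ w0 → A x y → r x < r y := by
    intro x y hx hy hyw hA
    by_contra hcon
    push_neg at hcon   -- r y ≤ r x
    have hry1 : 1 ≤ r y := by
      rcases Nat.eq_zero_or_pos (r y) with h0 | h0
      · exact absurd ((hr0 y).mp h0) hyw
      · exact h0
    set ℓ : ℕ := n - r x + r y with hℓ
    have hℓ1 : 1 ≤ ℓ := by have := hrlt x; omega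
    have hℓn : ℓ ≤ n := by have := hrlt x; omega
    have hcastℓ : ((ℓ : ℕ) : ZMod n) = ((r y : ℕ) : ZMod n) - ((r x : ℕ) : ZMod n) := by
      have hxn : r x ≤ n := le_of_lt (hrlt x)
      push_cast [hℓ, Nat.cast_sub hxn]
      rw [ZMod.natCast_self]
      ring
    have hsymm_y : v.symm y = i0 + ((r y : ℕ) : ZMod n) := by
      have := congrArg v.symm (hrcast y)
      simpa using this.symm
    have hsymm_x : v.symm x = i0 + ((r x : ℕ) : ZMod n) := by
      have := congrArg v.symm (hrcast x)
      simpa using this.symm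
    have hxy : v (v.symm y - ((ℓ : ℕ) : ZMod n)) = x := by
      rw [hcastℓ, hsymm_y]
      have : i0 + ((r y : ℕ) : ZMod n) - (((r y : ℕ) : ZMod n) - ((r x : ℕ) : ZMod n))
          = i0 + ((r x : ℕ) : ZMod n) := by ring
      rw [this, ← hsymm_x]
      simp
    have hA' : A (v (v.symm y - ((ℓ : ℕ) : ZMod n))) (v (v.symm y)) := by
      rw [hxy]; simpa using hA
    have hA2 := hin (v.symm y) (r y) ℓ hry1 (by omega) hℓn hA'
    have hw0y : v (v.symm y - ((r y : ℕ) : ZMod n)) = w0 := by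
      rw [hsymm_y]
      simp [hvi0]
    rw [hw0y] at hA2
    simp only [Equiv.apply_symm_apply] at hA2
    exact K2 y hy hA2
  -- acyclicity of the complement of X
  have hacyc : AcyclicOn A (Finset.univ \ X) := by
    intro u hu hTG
    set rel : V → V → Prop := fun x y =>
      x ∈ Finset.univ \ X ∧ y ∈ Finset.univ \ X ∧ A x y with hrel
    have hnostep : ∀ y : V, ¬ rel w0 y := by
      rintro y ⟨-, hy, hA⟩
      rw [Finset.mem_sdiff] at hy
      exact K2 y hy.2 hA
    have T1 : ∀ a b : V, Relation.TransGen rel a b → a ≠ w0 := by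
      intro a b h
      induction h using Relation.TransGen.head_induction_on with
      | single h => rintro rfl; exact hnostep _ h
      | head h _ _ => rintro rfl; exact hnostep _ h
    have T2 : ∀ a b : V, Relation.TransGen rel a b → b = w0 ∨ r a < r b := by
      intro a b h
      induction h with
      | @single c hab =>
        by_cases hb : c = w0
        · exact Or.inl hb
        · simp only [hrel, Finset.mem_sdiff] at hab
          exact Or.inr (K3 _ _ hab.1.2 hab.2.1.2 hb hab.2.2)
      | @tail b c hab hbc ih =>
        rcases ih with hb | hlt
        · rw [hb] at hbc; exact absurd hbc (hnostep _)
        · by_cases hc : c = w0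
          · exact Or.inl hc
          · simp only [hrel, Finset.mem_sdiff] at hbc
            exact Or.inr (hlt.trans (K3 _ _ hbc.1.2 hbc.2.1.2 hc hbc.2.2))
    rcases T2 u u hTG with h1 | h1
    · exact T1 u u hTG h1
    · omega
  -- conclude
  calc fvsNumber A ≤ X.card := Nat.sInf_le ⟨X, rfl, hacyc⟩
    _ ≤ (Finset.Icc 1 d).card := Finset.card_image_le
    _ = d := by rw [Nat.card_Icc]; omega

/-- For a round digraph `D` on `n ≥ 1` vertices (round ordering given by the
bijection `v : ZMod n ≃ V`, where out-neighborhoods and in-neighborhoods are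
cyclic intervals starting right after, resp. ending right before, each vertex),
`δ⁺(D) = cn(D) = fvs(D)`. -/
theorem round_copNumber {V : Type} [Fintype V] [DecidableEq V] (A : V → V → Prop)
    (n : ℕ) (hn : 1 ≤ n) (hcard : Fintype.card V = n)
    (v : ZMod n ≃ V)
    (hout : ∀ (i : ZMod n) (s t : ℕ), 1 ≤ s → s ≤ t → t ≤ n →
      A (v i) (v (i + (t : ZMod n))) → A (v i) (v (i + (s : ZMod n))))
    (hin : ∀ (i : ZMod n) (s t : ℕ), 1 ≤ s → s ≤ t → t ≤ n →
      A (v (i - (t : ZMod n))) (v i) → A (v (i - (s : ZMod n))) (v i)) :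
    minOutDeg A = copNumber A ∧ copNumber A = fvsNumber A := by
  have h1 := aux_minOutDeg_le_copNumber A (by omega)
  have h2 := aux_copNumber_le_fvsNumber A
  have h3 := aux_fvs_le_minOutDeg A n hn hcard v hout hin
  omega
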